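/- Let X be a Banach space with uniformly convex dual, S a closed subspace, x_n ∈ S with x_n → x ≠ 0, and let φ_n ∈ S* be the unique functional such that x_n solves the minimal-norm problem φ_n(y) = 1, ‖x_n‖ minimal, over S (and similarly φ for x). Then φ_n → φ in S*. -/

import Mathlib

open Filter NormedSpace

/-- If `z` has minimal norm on the hyperplane `ψ = 1`, then `‖ψ‖ * ‖z‖ = 1`. -/
lemma aux_norm_mul {E : Type*} [NormedAddCommGroup E] [NormedSpace ℂ E]
    (ψ : StrongDual ℂ E) (z : E) (h1 : ψ z = 1)
    (hmin : ∀ y : E, ψ y = 1 → ‖z‖ ≤ ‖y‖) : ‖ψ‖ * ‖z‖ = 1 := by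
  have hz : z ≠ 0 := by
    rintro rfl; simp at h1
  have hz0 : (0:ℝ) < ‖z‖ := norm_pos_iff.mpr hz
  have hup : ‖ψ‖ ≤ ‖z‖⁻¹ := by
    refine ContinuousLinearMap.opNorm_le_bound ψ (by positivity) fun y => ?_
    by_cases hy : ψ y = 0
    · simp [hy]; positivity
    · have hw : ψ ((ψ y)⁻¹ • y) = 1 := by
        simp [map_smul, smul_eq_mul, inv_mul_cancel₀ hy]
      have h2 := hmin _ hw
      rw [norm_smul, norm_inv] at h2
      have hψy : (0:ℝ) < ‖ψ y‖ := norm_pos_iff.mpr hy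
      rw [inv_mul_eq_div, le_div_iff₀ hz0]
      calc ‖ψ y‖ * ‖z‖ ≤ ‖ψ y‖ * (‖ψ y‖⁻¹ * ‖y‖) :=
            mul_le_mul_of_nonneg_left h2 (norm_nonneg _)
        _ = ‖y‖ := by rw [← mul_assoc, mul_inv_cancel₀ hψy.ne', one_mul]
  have hlo : 1 ≤ ‖ψ‖ * ‖z‖ := by
    have := ψ.le_opNorm z
    rw [h1] at this
    simpa using this
  have : ‖ψ‖ * ‖z‖ ≤ 1 := by
    calc ‖ψ‖ * ‖z‖ ≤ ‖z‖⁻¹ * ‖z‖ := mul_le_mul_of_nonneg_right hup (norm_nonneg _)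
      _ = 1 := inv_mul_cancel₀ hz0.ne'
  linarith

theorem functional_continuity
    {X : Type*} [NormedAddCommGroup X] [NormedSpace ℂ X] [CompleteSpace X]
    [UniformConvexSpace (StrongDual ℂ X)]
    (S : Submodule ℂ X) (hS : IsClosed (S : Set X))
    (xn : ℕ → S) (x : S) (hx : x ≠ 0)
    (hxn : Filter.Tendsto xn Filter.atTop (nhds x))
    (φn : ℕ → StrongDual ℂ S) (φ : StrongDual ℂ S)
    (hφn : ∀ n, φn n (xn n) = 1 ∧ ∀ y : S, φn n y = 1 → ‖xn n‖ ≤ ‖y‖)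
    (hφ : φ x = 1 ∧ ∀ y : S, φ y = 1 → ‖x‖ ≤ ‖y‖) :
    Filter.Tendsto φn Filter.atTop (nhds φ) := by
  classical
  -- basic norm facts
  have hx0 : (0:ℝ) < ‖x‖ := norm_pos_iff.mpr hx
  have hxnne : ∀ n, xn n ≠ 0 := by
    intro n h
    have := (hφn n).1
    rw [h] at this; simp at this
  have hxn0 : ∀ n, (0:ℝ) < ‖xn n‖ := fun n => norm_pos_iff.mpr (hxnne n)
  have hnφn : ∀ n, ‖φn n‖ * ‖xn n‖ = 1 := fun n => aux_norm_mul _ _ (hφn n).1 (hφn n).2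
  have hnφ : ‖φ‖ * ‖x‖ = 1 := aux_norm_mul _ _ hφ.1 hφ.2
  -- Hahn-Banach extensions
  choose Φn hΦn hΦnnorm using fun n => exists_extension_norm_eq S (φn n)
  obtain ⟨Φ0, hΦ0, hΦ0norm⟩ := exists_extension_norm_eq S φ
  -- normalized unit vectors in Dual ℂ X
  set Un : ℕ → StrongDual ℂ X := fun n => ‖xn n‖ • Φn n with hUndef
  set U : StrongDual ℂ X := ‖x‖ • Φ0 with hUdef
  have hUn1 : ∀ n, ‖Un n‖ = 1 := by
    intro n
    rw [hUndef, norm_smul, Real.norm_of_nonneg (norm_nonneg _), hΦnnorm, mul_comm]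
    exact hnφn n
  have hU1 : ‖U‖ = 1 := by
    rw [hUdef, norm_smul, Real.norm_of_nonneg (norm_nonneg _), hΦ0norm, mul_comm]
    exact hnφ
  -- norm convergence
  have hnorm : Tendsto (fun n => ‖xn n‖) atTop (nhds ‖x‖) := hxn.norm
  have hφnnorm : Tendsto (fun n => ‖φn n‖) atTop (nhds ‖x‖⁻¹) := by
    have : ∀ n, ‖φn n‖ = ‖xn n‖⁻¹ := fun n => eq_inv_of_mul_eq_one_left (hnφn n)
    simp only [this]
    exact hnorm.inv₀ hx0.ne'
  have hdiff : Tendsto (fun n => ‖x - xn n‖) atTop (nhds 0) := by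
    have := (tendsto_iff_norm_sub_tendsto_zero.mp hxn)
    simpa [norm_sub_rev] using this
  -- φn n x → 1
  have hφnx : Tendsto (fun n => φn n x) atTop (nhds 1) := by
    rw [tendsto_iff_norm_sub_tendsto_zero]
    have hb : Tendsto (fun n => ‖φn n‖ * ‖x - xn n‖) atTop (nhds 0) := by
      have := hφnnorm.mul hdiff
      simpa using this
    refine squeeze_zero (fun n => norm_nonneg _) (fun n => ?_) hb
    have : φn n x - 1 = φn n (x - xn n) := by
      rw [map_sub, (hφn n).1]
    rw [this]
    exact (φn n).le_opNorm _
  -- (Un n) x → ‖x‖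
  have hUx : Tendsto (fun n => Un n (x : X)) atTop (nhds (‖x‖ : ℂ)) := by
    have : ∀ n, Un n (x : X) = (‖xn n‖ : ℝ) • φn n x := by
      intro n
      rw [hUndef]
      simp [hΦn n x]
    simp only [this]
    have := hnorm.smul hφnx
    simpa using this
  have hUxval : U (x : X) = (‖x‖ : ℂ) := by
    rw [hUdef]
    simp [hΦ0 x, hφ.1]
  -- ‖Un n + U‖ → 2
  have hsum : Tendsto (fun n => ‖(Un n + U) (x : X)‖) atTop (nhds (2 * ‖x‖)) := by
    have h1 : Tendsto (fun n => Un n (x:X) + U (x:X)) atTop (nhds ((‖x‖ : ℂ) + ‖x‖)) :=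
      hUx.add (by rw [hUxval]; exact tendsto_const_nhds)
    have := h1.norm
    have h2 : ‖(‖x‖ : ℂ) + ‖x‖‖ = 2 * ‖x‖ := by
      rw [← Complex.ofReal_add, Complex.norm_real]
      rw [Real.norm_of_nonneg (by positivity)]
      ring
    rw [h2] at this
    simpa using this
  have hxcoe : ‖(x : X)‖ = ‖x‖ := rfl
  have hlow : Tendsto (fun n => ‖Un n + U‖) atTop (nhds 2) := by
    have hle2 : ∀ n, ‖Un n + U‖ ≤ 2 := by
      intro n
      calc ‖Un n + U‖ ≤ ‖Un n‖ + ‖U‖ := norm_add_le _ _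
        _ = 2 := by rw [hUn1 n, hU1]; norm_num
    have hge : ∀ n, ‖(Un n + U) (x : X)‖ / ‖x‖ ≤ ‖Un n + U‖ := by
      intro n
      rw [div_le_iff₀ hx0]
      calc ‖(Un n + U) (x : X)‖ ≤ ‖Un n + U‖ * ‖(x:X)‖ := (Un n + U).le_opNorm _
        _ = ‖Un n + U‖ * ‖x‖ := by rw [hxcoe]
    have hlows : Tendsto (fun n => ‖(Un n + U) (x : X)‖ / ‖x‖) atTop (nhds 2) := by
      have := hsum.div_const ‖x‖
      rwa [mul_div_assoc, div_self hx0.ne', mul_one] at this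
    exact tendsto_of_tendsto_of_tendsto_of_le_of_le hlows tendsto_const_nhds hge hle2
  -- uniform convexity: Un → U
  have hUconv : Tendsto Un atTop (nhds U) := by
    rw [Metric.tendsto_atTop]
    intro ε hε
    obtain ⟨δ, hδ, hUC⟩ :=
      exists_forall_sphere_dist_add_le_two_sub (StrongDual ℂ X) hε
    have hev := hlow.eventually (eventually_gt_nhds (show 2 - δ < 2 by linarith))
    rw [Filter.eventually_atTop] at hev
    obtain ⟨N, hN⟩ := hev
    refine ⟨N, fun n hn => ?_⟩
    rw [dist_eq_norm]
    by_contra hcon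
    push_neg at hcon
    exact absurd (hUC (hUn1 n) hU1 hcon) (by linarith [hN n hn])
  -- rescale back: Φn n → Φ0
  have hΦconv : Tendsto Φn atTop (nhds Φ0) := by
    have h1 : Tendsto (fun n => (‖xn n‖⁻¹ : ℝ) • Un n) atTop (nhds ((‖x‖⁻¹ : ℝ) • U)) :=
      (hnorm.inv₀ hx0.ne').smul hUconv
    have h2 : ∀ n, (‖xn n‖⁻¹ : ℝ) • Un n = Φn n := by
      intro n
      rw [hUndef, smul_smul, inv_mul_cancel₀ (hxn0 n).ne', one_smul]
    have h3 : (‖x‖⁻¹ : ℝ) • U = Φ0 := by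
      rw [hUdef, smul_smul, inv_mul_cancel₀ hx0.ne', one_smul]
    rw [funext h2, h3] at h1
    exact h1
  -- restrict to S
  refine (tendsto_iff_norm_sub_tendsto_zero (f := φn) (b := φ)).mpr ?_
  have hb : Tendsto (fun n => ‖Φn n - Φ0‖) atTop (nhds 0) :=
    tendsto_iff_norm_sub_tendsto_zero.mp hΦconv
  refine squeeze_zero (fun n => norm_nonneg (φn n - φ)) (fun n => ?_) hb
  refine ContinuousLinearMap.opNorm_le_bound _ (norm_nonneg _) fun y => ?_
  have : (φn n - φ) y = (Φn n - Φ0) (y : X) := by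
    simp [hΦn n y, hΦ0 y]
  rw [this]
  exact (Φn n - Φ0).le_opNorm _
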